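/- Let V be an n-dimensional vector space over a field F (n a positive natural number), and let (V_i)_{i∈I} be a family of subspaces of V, each of codimension one, such that ⋂_{i∈I} V_i = {0}. Then there exists a subset {i₁, …, i_n} ⊆ I of n indices such that ⋂_{j=1}^n V_{i_j} = {0}. Furthermore, setting U_l := ⋂_{j≠l, 1≤j≤n} V_{i_j} for each 1 ≤ l ≤ n, each U_l is one-dimensional and V is the internal direct sum of U₁, …, U_n. -/

import Mathlib

open Module

private lemma aux_codim {F V : Type} [Field F] [AddCommGroup V] [Module F V]
    [FiniteDimensional F V] {ι : Type*} [DecidableEq ι] (s : Finset ι)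
    (H : ι → Submodule F V) (hH : ∀ i, finrank F V ≤ finrank F (H i) + 1) :
    finrank F V ≤ finrank F (s.inf H : Submodule F V) + s.card := by
  induction s using Finset.induction_on with
  | empty => show finrank F V ≤ finrank F (⊤ : Submodule F V) + 0; simp [finrank_top]
  | @insert a s ha ih =>
    rw [Finset.inf_insert, Finset.card_insert_of_notMem ha]
    have key := Submodule.finrank_sup_add_finrank_inf_eq (H a) (s.inf H)
    have h1 : finrank F ↥(H a ⊔ s.inf H) ≤ finrank F V := Submodule.finrank_le _
    have h2 := hH a
    omega

/-- Let `V` be an `n`-dimensional vector space over a field `F` (`n` a positive natural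
number), and let `(V_i)_{i ∈ I}` be a family of subspaces of `V`, each of codimension one,
such that `⋂_{i ∈ I} V_i = {0}`.  Then there exist `n` indices `i₁, …, iₙ ∈ I` such that
`⋂_{j=1}^n V_{i_j} = {0}`.  Furthermore, setting `U_l := ⋂_{j ≠ l} V_{i_j}` for each
`1 ≤ l ≤ n`, each `U_l` is one-dimensional and `V` is the internal direct sum of
`U₁, …, Uₙ`. -/
theorem stmt10 (F : Type) [Field F] (V : Type) [AddCommGroup V] [Module F V]
    [FiniteDimensional F V] (n : ℕ) (hn : 0 < n) (hdim : finrank F V = n)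
    (I : Type) (Vi : I → Submodule F V)
    (hcodim : ∀ i : I, finrank F (Vi i) = n - 1)
    (hint : ⨅ i : I, Vi i = ⊥) :
    ∃ f : Fin n → I,
      (⨅ j : Fin n, Vi (f j)) = ⊥ ∧
      (∀ l : Fin n,
        finrank F (⨅ j : Fin n, ⨅ _ : j ≠ l, Vi (f j) : Submodule F V) = 1) ∧
      DirectSum.IsInternal (fun l : Fin n => ⨅ j : Fin n, ⨅ _ : j ≠ l, Vi (f j)) := by
  classical
  -- greedy construction
  have key : ∀ k : ℕ, k ≤ n →
      ∃ f : Fin k → I, finrank F (⨅ j, Vi (f j) : Submodule F V) = n - k := by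
    intro k
    induction k with
    | zero =>
      intro _
      refine ⟨Fin.elim0, ?_⟩
      rw [show (⨅ j : Fin 0, Vi (Fin.elim0 j)) = ⊤ from iInf_of_empty _]
      rw [finrank_top, hdim, Nat.sub_zero]
    | succ k ih =>
      intro hk
      obtain ⟨f, hf⟩ := ih (Nat.le_of_succ_le hk)
      set W : Submodule F V := ⨅ j, Vi (f j) with hW
      have hWpos : 0 < finrank F W := by omega
      have hWne : W ≠ ⊥ := by
        intro h
        rw [h, finrank_bot] at hWpos
        omega
      have : ∃ i : I, ¬ W ≤ Vi i := by
        by_contra h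
        push_neg at h
        exact hWne (le_bot_iff.mp (hint ▸ le_iInf h))
      obtain ⟨i, hi⟩ := this
      refine ⟨(Fin.cons i f : Fin (k+1) → I), ?_⟩
      have heq : (⨅ j : Fin (k + 1), Vi ((Fin.cons i f : Fin (k+1) → I) j)) = Vi i ⊓ W := by
        ext x
        simp [Submodule.mem_iInf, Fin.forall_fin_succ, hW]
      rw [heq]
      have key2 := Submodule.finrank_sup_add_finrank_inf_eq (Vi i) W
      have h1 : finrank F ↥(Vi i ⊔ W) ≤ finrank F V := Submodule.finrank_le _
      have h2 : Vi i ⊓ W < W := by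
        refine lt_of_le_of_ne inf_le_right ?_
        intro h
        exact hi (h ▸ inf_le_left)
      have h3 := Submodule.finrank_lt_finrank_of_lt h2
      have h4 := hcodim i
      omega
  obtain ⟨f, hf⟩ := key n le_rfl
  have hfbot : (⨅ j : Fin n, Vi (f j)) = ⊥ := by
    have := hf
    rw [Nat.sub_self] at this
    exact Submodule.finrank_eq_zero.mp this
  set U : Fin n → Submodule F V := fun l => ⨅ j, ⨅ _ : j ≠ l, Vi (f j) with hU
  have hUV : ∀ l k : Fin n, k ≠ l → U l ≤ Vi (f k) := by
    intro l k hkl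
    exact iInf_le_of_le k (iInf_le_of_le hkl le_rfl)
  have hUl_inf : ∀ l, U l ⊓ Vi (f l) = ⊥ := by
    intro l
    rw [← le_bot_iff, ← hfbot]
    refine le_iInf fun j => ?_
    by_cases h : j = l
    · subst h; exact inf_le_right
    · exact le_trans inf_le_left (hUV l j h)
  -- each U l is one-dimensional
  have rank1 : ∀ l, finrank F (U l) = 1 := by
    intro l
    have upper : finrank F (U l) ≤ 1 := by
      have key2 := Submodule.finrank_sup_add_finrank_inf_eq (U l) (Vi (f l))
      rw [hUl_inf l, finrank_bot] at key2
      have h1 : finrank F ↥(U l ⊔ Vi (f l)) ≤ finrank F V := Submodule.finrank_le _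
      have h4 := hcodim (f l)
      omega
    have lower : 1 ≤ finrank F (U l) := by
      have heq : U l = ((Finset.univ.erase l).inf fun j => Vi (f j)) := by
        ext x
        simp [hU, Submodule.mem_iInf, Finset.inf_eq_iInf, Finset.mem_erase]
      have hcard : (Finset.univ.erase l).card = n - 1 := by
        rw [Finset.card_erase_of_mem (Finset.mem_univ l)]
        simp
      have := aux_codim (Finset.univ.erase l) (fun j => Vi (f j))
        (fun j => by
          show finrank F V ≤ finrank F (Vi (f j)) + 1
          rw [hdim, hcodim (f j)]; omega)
      rw [← heq, hcard, hdim] at this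
      omega
    omega
  -- independence
  have hindep : iSupIndep U := by
    intro l
    rw [disjoint_iff]
    have hle : (⨆ k, ⨆ _ : k ≠ l, U k) ≤ Vi (f l) :=
      iSup_le fun k => iSup_le fun hk => hUV k l (Ne.symm hk)
    exact le_antisymm (le_trans (inf_le_inf_left _ hle) (hUl_inf l).le) bot_le
  -- iSup = ⊤
  have hv : ∀ l, ∃ x : V, x ∈ U l ∧ x ≠ 0 := by
    intro l
    have : U l ≠ ⊥ := by
      intro h
      have := rank1 l
      rw [h, finrank_bot] at this
      omega
    obtain ⟨x, hx, hx0⟩ := (Submodule.ne_bot_iff _).mp this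
    exact ⟨x, hx, hx0⟩
  choose v hvmem hvne using hv
  have hli : LinearIndependent F v := hindep.linearIndependent U hvmem hvne
  haveI : Nonempty (Fin n) := ⟨⟨0, hn⟩⟩
  have hspan : Submodule.span F (Set.range v) = ⊤ :=
    hli.span_eq_top_of_card_eq_finrank (by simp [hdim])
  have htop : (⨆ l, U l) = ⊤ := by
    rw [eq_top_iff, ← hspan, Submodule.span_range_eq_iSup]
    exact iSup_mono fun l => (Submodule.span_singleton_le_iff_mem _ _).mpr (hvmem l)
  exact ⟨f, hfbot, rank1,
    DirectSum.isInternal_submodule_of_iSupIndep_of_iSup_eq_top hindep htop⟩
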